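/- arXiv:math/9503230 — 2 statements merged into one kernel-verified Lean document; each statement's English description precedes it below -/
import Mathlib

section
/- Let p > 3 be a prime and x ∈ F_p with x ≠ 0 and x² + 1 ≠ 0. Then the double coset B·(1 0; x 1)·C₄ is the disjoint union of the two distinct right cosets B·(1 0; x 1) and B·(1 0; -1/x 1); moreover B·a₄·C₄ = B ⊔ B·a₄. If instead x² + 1 = 0, then B·(1 0; x 1)·C₄ equals the single coset B·(1 0; x 1). -/
open Pointwise

namespace AdemNaffah

section CosetAux
variable {G : Type*} [Group G] (H : Subgroup G)

lemma mem_coset_iff (g x : G) : x ∈ (H : Set G) * {g} ↔ x * g⁻¹ ∈ H := by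
  constructor
  · rintro ⟨b, hb, g', hg', rfl⟩
    simp only [Set.mem_singleton_iff] at hg'
    subst hg'
    simpa using hb
  · intro h
    exact ⟨x * g⁻¹, h, g, rfl, by group⟩

lemma coset_eq_of (g h : G) (hgh : g * h⁻¹ ∈ H) : (H : Set G) * {g} = (H : Set G) * {h} := by
  ext x
  rw [mem_coset_iff, mem_coset_iff]
  constructor
  · intro hx
    have h1 := H.mul_mem hx hgh
    have e : x * g⁻¹ * (g * h⁻¹) = x * h⁻¹ := by group
    rwa [e] at h1
  · intro hx
    have h1 := H.mul_mem hx (H.inv_mem hgh)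
    have e : x * h⁻¹ * (g * h⁻¹)⁻¹ = x * g⁻¹ := by group
    rwa [e] at h1

lemma coset_disjoint (g h : G) (hgh : g * h⁻¹ ∉ H) :
    Disjoint ((H : Set G) * {g}) ((H : Set G) * {h}) := by
  rw [Set.disjoint_left]
  intro x hx hx'
  rw [mem_coset_iff] at hx hx'
  apply hgh
  have h1 := H.mul_mem (H.inv_mem hx) hx'
  have e : (x * g⁻¹)⁻¹ * (x * h⁻¹) = g * h⁻¹ := by group
  rwa [e] at h1

lemma zpowers_cases {a z : G} (h4 : a ^ (4:ℕ) = 1) (hz : z ∈ Subgroup.zpowers a) :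
    z = 1 ∨ z = a ∨ z = a ^ 2 ∨ z = a ^ 3 := by
  obtain ⟨n, rfl⟩ := hz
  have key : a ^ n = a ^ (n % 4).toNat := by
    conv_lhs => rw [show n = 4 * (n / 4) + n % 4 from (Int.mul_ediv_add_emod n 4).symm]
    rw [zpow_add, zpow_mul]
    have : a ^ (4:ℤ) = 1 := by rw [show (4:ℤ) = ((4:ℕ):ℤ) from rfl, zpow_natCast, h4]
    rw [this, one_zpow, one_mul, ← zpow_natCast, Int.toNat_of_nonneg (Int.emod_nonneg n (by norm_num))]
  beta_reduce
  rw [key]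
  have hlt : (n % 4).toNat < 4 := by omega
  interval_cases h : (n % 4).toNat <;> simp

end CosetAux

variable (p : ℕ)

/-- The Borel subgroup of `SL₂(𝔽_p)`: matrices with lower-left entry `0`. -/
def BorelSL2 : Subgroup (Matrix.SpecialLinearGroup (Fin 2) (ZMod p)) where
  carrier := {g | (g : Matrix (Fin 2) (Fin 2) (ZMod p)) 1 0 = 0}
  one_mem' := by simp
  mul_mem' := by
    intro a b ha hb
    simp only [Set.mem_setOf_eq] at *
    rw [Matrix.SpecialLinearGroup.coe_mul, Matrix.mul_apply]
    simp [Fin.sum_univ_two, ha, hb]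
  inv_mem' := by
    intro a ha
    simp only [Set.mem_setOf_eq] at *
    rw [Matrix.SpecialLinearGroup.SL2_inv_expl]
    simp [ha]

/-- The unipotent lower-triangular matrix `(1 0; x 1)` in `SL₂(𝔽_p)`. -/
def unip (x : ZMod p) : Matrix.SpecialLinearGroup (Fin 2) (ZMod p) :=
  ⟨!![1, 0; x, 1], by simp [Matrix.det_fin_two_of]⟩

/-- The element `a₄ = (0 -1; 1 0)` of order 4. -/
def a4 : Matrix.SpecialLinearGroup (Fin 2) (ZMod p) :=
  ⟨!![0, -1; 1, 0], by simp [Matrix.det_fin_two_of]⟩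

lemma mem_Borel (g : Matrix.SpecialLinearGroup (Fin 2) (ZMod p)) :
    g ∈ BorelSL2 p ↔ (g : Matrix (Fin 2) (Fin 2) (ZMod p)) 1 0 = 0 := Iff.rfl

lemma a4_mul_a4 : a4 p * a4 p = -1 := by
  ext i j
  fin_cases i <;> fin_cases j <;>
    erw [Matrix.SpecialLinearGroup.coe_mul] <;>
    simp [a4, Matrix.mul_apply, Fin.sum_univ_two]

lemma a4_pow_four : a4 p ^ (4:ℕ) = 1 := by
  have h2 : a4 p ^ 2 = -1 := by rw [pow_two, a4_mul_a4]
  rw [show (4:ℕ) = 2 * 2 from rfl, pow_mul, h2]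
  simp

lemma coset_one {G : Type*} [Group G] (H : Subgroup G) : (H : Set G) * {1} = (H : Set G) := by
  simp

lemma unip_mul (a b : ZMod p) : unip p a * unip p b = unip p (a + b) := by
  ext i j
  fin_cases i <;> fin_cases j <;>
    erw [Matrix.SpecialLinearGroup.coe_mul] <;>
    simp [unip, Matrix.mul_apply, Fin.sum_univ_two, add_comm]

lemma unip_inv (a : ZMod p) : (unip p a)⁻¹ = unip p (-a) := by
  apply inv_eq_of_mul_eq_one_right
  rw [unip_mul]
  ext i j
  fin_cases i <;> fin_cases j <;> simp [unip]

lemma neg_one_mem : (-1 : Matrix.SpecialLinearGroup (Fin 2) (ZMod p)) ∈ BorelSL2 p := by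
  rw [mem_Borel]; simp

lemma entry10 (x z : ZMod p) :
    ((unip p x * a4 p * unip p z : Matrix.SpecialLinearGroup (Fin 2) (ZMod p)) :
      Matrix (Fin 2) (Fin 2) (ZMod p)) 1 0 = 1 - x * z := by
  erw [Matrix.SpecialLinearGroup.coe_mul, Matrix.SpecialLinearGroup.coe_mul]
  simp [unip, a4, Matrix.mul_apply, Fin.sum_univ_two]
  ring

lemma unip_mem_iff (t : ZMod p) : unip p t ∈ BorelSL2 p ↔ t = 0 := by
  rw [mem_Borel]; simp [unip]

/-- key structural lemma: `B·g·⟨a₄⟩ = B·g ∪ B·(g·a₄)`. -/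
lemma doset_eq (g : Matrix.SpecialLinearGroup (Fin 2) (ZMod p)) :
    (BorelSL2 p : Set (Matrix.SpecialLinearGroup (Fin 2) (ZMod p))) * {g} *
        (Subgroup.zpowers (a4 p) : Set (Matrix.SpecialLinearGroup (Fin 2) (ZMod p))) =
      (BorelSL2 p : Set (Matrix.SpecialLinearGroup (Fin 2) (ZMod p))) * {g} ∪ (BorelSL2 p : Set _) * {g * a4 p} := by
  ext w
  simp only [Set.mem_union]
  constructor
  · rintro ⟨u, hu, z, hz, rfl⟩
    rw [mem_coset_iff] at hu
    rcases zpowers_cases (a4_pow_four p) hz with rfl | rfl | rfl | rfl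
    · left; rw [mem_coset_iff]; simpa using hu
    · right; rw [mem_coset_iff]
      have e : u * a4 p * (g * a4 p)⁻¹ = u * g⁻¹ := by group
      rw [e]; exact hu
    · left; rw [mem_coset_iff]
      have e : u * a4 p ^ 2 * g⁻¹ = (-1) * (u * g⁻¹) := by
        rw [pow_two, a4_mul_a4, mul_neg_one, neg_mul, neg_one_mul]
      rw [e]; exact (BorelSL2 p).mul_mem (neg_one_mem p) hu
    · right; rw [mem_coset_iff]
      have e : u * a4 p ^ 3 * (g * a4 p)⁻¹ = (-1) * (u * g⁻¹) := by
        have h3 : a4 p ^ 3 = (-1) * a4 p := by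
          rw [pow_succ, pow_two, a4_mul_a4, neg_one_mul]
        rw [h3, neg_one_mul, mul_neg, neg_mul, neg_one_mul]
        congr 1
        group
      rw [e]; exact (BorelSL2 p).mul_mem (neg_one_mem p) hu
  · rintro (hw | hw)
    · have h1 := Set.mul_mem_mul hw
        (show (1 : Matrix.SpecialLinearGroup (Fin 2) (ZMod p)) ∈
          (Subgroup.zpowers (a4 p) : Set _) from Subgroup.one_mem _)
      simpa using h1
    · rw [mem_coset_iff] at hw
      have h1 : w * (g * a4 p)⁻¹ * g ∈ (BorelSL2 p : Set (Matrix.SpecialLinearGroup (Fin 2) (ZMod p))) * {g} := by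
        rw [mem_coset_iff]
        have e : w * (g * a4 p)⁻¹ * g * g⁻¹ = w * (g * a4 p)⁻¹ := by group
        rw [e]; exact hw
      have h2 := Set.mul_mem_mul h1
        (show a4 p ∈ (Subgroup.zpowers (a4 p) : Set _) from Subgroup.mem_zpowers _)
      have e : w * (g * a4 p)⁻¹ * g * a4 p = w := by group
      rwa [e] at h2

/-- Double coset decomposition for `B` and `C₄ = ⟨a₄⟩` in `SL₂(𝔽_p)`, `p > 3`:
if `x ≠ 0` and `x² + 1 ≠ 0` then `B·u(x)·C₄` is the disjoint union of the two distinct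
right cosets `B·u(x)` and `B·u(-1/x)`; moreover `B·a₄·C₄ = B ⊔ B·a₄`; and if
`x² + 1 = 0` then `B·u(x)·C₄ = B·u(x)`. -/
theorem doset_C4_decomposition (hp : p.Prime) (hp3 : 3 < p) (x : ZMod p) :
    (x ≠ 0 → x ^ 2 + 1 ≠ 0 →
      ((BorelSL2 p : Set (Matrix.SpecialLinearGroup (Fin 2) (ZMod p))) * {unip p x} *
          (Subgroup.zpowers (a4 p) : Set (Matrix.SpecialLinearGroup (Fin 2) (ZMod p))) =
        (BorelSL2 p : Set (Matrix.SpecialLinearGroup (Fin 2) (ZMod p))) * {unip p x} ∪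
          (BorelSL2 p : Set (Matrix.SpecialLinearGroup (Fin 2) (ZMod p))) * {unip p (-x⁻¹)}) ∧
      Disjoint
        ((BorelSL2 p : Set (Matrix.SpecialLinearGroup (Fin 2) (ZMod p))) * {unip p x})
        ((BorelSL2 p : Set (Matrix.SpecialLinearGroup (Fin 2) (ZMod p))) * {unip p (-x⁻¹)}) ∧
      (BorelSL2 p : Set (Matrix.SpecialLinearGroup (Fin 2) (ZMod p))) * {unip p x} ≠
        (BorelSL2 p : Set (Matrix.SpecialLinearGroup (Fin 2) (ZMod p))) * {unip p (-x⁻¹)}) ∧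
    ((BorelSL2 p : Set (Matrix.SpecialLinearGroup (Fin 2) (ZMod p))) * {a4 p} *
        (Subgroup.zpowers (a4 p) : Set (Matrix.SpecialLinearGroup (Fin 2) (ZMod p))) =
      (BorelSL2 p : Set (Matrix.SpecialLinearGroup (Fin 2) (ZMod p))) ∪
        (BorelSL2 p : Set (Matrix.SpecialLinearGroup (Fin 2) (ZMod p))) * {a4 p}) ∧
    Disjoint
      (BorelSL2 p : Set (Matrix.SpecialLinearGroup (Fin 2) (ZMod p)))
      ((BorelSL2 p : Set (Matrix.SpecialLinearGroup (Fin 2) (ZMod p))) * {a4 p}) ∧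
    (x ^ 2 + 1 = 0 →
      (BorelSL2 p : Set (Matrix.SpecialLinearGroup (Fin 2) (ZMod p))) * {unip p x} *
          (Subgroup.zpowers (a4 p) : Set (Matrix.SpecialLinearGroup (Fin 2) (ZMod p))) =
        (BorelSL2 p : Set (Matrix.SpecialLinearGroup (Fin 2) (ZMod p))) * {unip p x}) := by
  haveI : Fact p.Prime := ⟨hp⟩
  refine ⟨fun hx hx2 => ?_, ?_, ?_, fun hx2 => ?_⟩
  · have hdisj : Disjoint ((BorelSL2 p : Set (Matrix.SpecialLinearGroup (Fin 2) (ZMod p))) * {unip p x})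
        ((BorelSL2 p : Set (Matrix.SpecialLinearGroup (Fin 2) (ZMod p))) * {unip p (-x⁻¹)}) := by
      apply coset_disjoint
      rw [unip_inv, neg_neg, unip_mul, unip_mem_iff]
      intro h0
      apply hx2
      have hxx : x * (x + x⁻¹) = 0 := by rw [h0, mul_zero]
      rw [mul_add, mul_inv_cancel₀ hx] at hxx
      rw [pow_two]; exact hxx
    refine ⟨?_, hdisj, ?_⟩
    · rw [doset_eq]
      congr 1
      apply coset_eq_of
      rw [mem_Borel, unip_inv, neg_neg, entry10, mul_inv_cancel₀ hx, sub_self]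
    · intro heq
      have hmem : unip p x ∈ (BorelSL2 p : Set (Matrix.SpecialLinearGroup (Fin 2) (ZMod p))) * {unip p x} := by
        rw [mem_coset_iff]; simpa using (BorelSL2 p).one_mem
      exact Set.disjoint_left.mp hdisj hmem (heq ▸ hmem)
  · rw [doset_eq, a4_mul_a4, Set.union_comm]
    congr 1
    have h1 : (BorelSL2 p : Set (Matrix.SpecialLinearGroup (Fin 2) (ZMod p))) * {(-1 : Matrix.SpecialLinearGroup (Fin 2) (ZMod p))} =
        (BorelSL2 p : Set (Matrix.SpecialLinearGroup (Fin 2) (ZMod p))) * {(1 : Matrix.SpecialLinearGroup (Fin 2) (ZMod p))} := by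
      apply coset_eq_of
      simpa using neg_one_mem p
    rw [h1, coset_one]
  · have hnot : (1 : Matrix.SpecialLinearGroup (Fin 2) (ZMod p)) * (a4 p)⁻¹ ∉ BorelSL2 p := by
      have ha : (a4 p)⁻¹ = -(a4 p) := by
        apply inv_eq_of_mul_eq_one_right
        rw [mul_neg, a4_mul_a4]; simp
      rw [one_mul, ha, mem_Borel]
      erw [Matrix.SpecialLinearGroup.coe_neg]
      simp [a4]
    have hd := coset_disjoint (BorelSL2 p) 1 (a4 p) hnot
    rwa [coset_one] at hd
  · rw [doset_eq]
    have h1 : (BorelSL2 p : Set (Matrix.SpecialLinearGroup (Fin 2) (ZMod p))) * {unip p x * a4 p} =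
        (BorelSL2 p : Set (Matrix.SpecialLinearGroup (Fin 2) (ZMod p))) * {unip p x} := by
      apply coset_eq_of
      rw [mem_Borel, unip_inv, entry10]
      have e : x * -x = -x ^ 2 := by ring
      rw [e, sub_neg_eq_add, add_comm]
      exact hx2
    rw [h1, Set.union_self]


end AdemNaffah
end

section
/- Let p > 3 be a prime. Then H¹(SL₂(ℤ[1/p]), ℤ) = 0. -/
open Matrix CategoryTheory

abbrev Rloc (p : ℕ) := Localization.Away ((p : ℤ))
abbrev SL2p (p : ℕ) := Matrix.SpecialLinearGroup (Fin 2) (Rloc p)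

def Emat (p : ℕ) (x : Rloc p) : SL2p p :=
  ⟨!![1, x; 0, 1], by simp [Matrix.det_fin_two_of]⟩

def Fmat (p : ℕ) (x : Rloc p) : SL2p p :=
  ⟨!![1, 0; x, 1], by simp [Matrix.det_fin_two_of]⟩

lemma Emat_mul (p : ℕ) (x y : Rloc p) : Emat p x * Emat p y = Emat p (x + y) := by
  apply Subtype.ext
  rw [Matrix.SpecialLinearGroup.coe_mul]
  simp only [Matrix.SpecialLinearGroup.coe_mul, Emat, Matrix.mul_fin_two]
  norm_num
  ring_nf

lemma Fmat_mul (p : ℕ) (x y : Rloc p) : Fmat p x * Fmat p y = Fmat p (x + y) := by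
  apply Subtype.ext
  rw [Matrix.SpecialLinearGroup.coe_mul]
  simp only [Matrix.SpecialLinearGroup.coe_mul, Fmat, Matrix.mul_fin_two]
  norm_num

/-- An additive hom from `ℤ[1/p]` to `ℤ` is zero. -/
lemma addHom_eq_zero (p : ℕ) (hp2 : 2 ≤ p) (g : Rloc p →+ ℤ) (x : Rloc p) : g x = 0 := by
  have hu : IsUnit (algebraMap ℤ (Rloc p) (p : ℤ)) :=
    IsLocalization.Away.algebraMap_isUnit _
  obtain ⟨u, hu'⟩ := hu
  have key : ∀ n : ℕ, ((p : ℤ) ^ n) ∣ g x := by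
    intro n
    have hx : x = ((p : ℤ) ^ n) • (((u⁻¹ : (Rloc p)ˣ) : Rloc p) ^ n * x) := by
      rw [zsmul_eq_mul]
      have : (((p : ℤ) ^ n : ℤ) : Rloc p) = (u : Rloc p) ^ n := by
        rw [hu']
        push_cast
        ring
      rw [this, ← mul_assoc, ← mul_pow]
      simp
    refine ⟨g (((u⁻¹ : (Rloc p)ˣ) : Rloc p) ^ n * x), ?_⟩
    conv_lhs => rw [hx]
    rw [map_zsmul]
    simp [zsmul_eq_mul]
  set m := (g x).natAbs with hm
  refine Int.eq_zero_of_dvd_of_natAbs_lt_natAbs (key m) ?_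
  have h1 : m < 2 ^ m := Nat.lt_two_pow_self (n := m)
  have h2 : 2 ^ m ≤ p ^ m := Nat.pow_le_pow_left hp2 m
  have h3 : ((p : ℤ) ^ m).natAbs = p ^ m := by
    rw [Int.natAbs_pow]
    simp
  omega

lemma f_eq_zero (p : ℕ) (hp2 : 2 ≤ p) (f : SL2p p → ℤ)
    (hf : ∀ A B : SL2p p, f (A * B) = f A + f B)
    (A : SL2p p) : f A = 0 := by
  -- f vanishes on elementary matrices
  have hE : ∀ x, f (Emat p x) = 0 := by
    have := addHom_eq_zero p hp2 (AddMonoidHom.mk' (fun x => f (Emat p x))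
      (by intro x y; show f (Emat p (x + y)) = f (Emat p x) + f (Emat p y)
          rw [← Emat_mul, hf]))
    simpa using this
  have hF : ∀ x, f (Fmat p x) = 0 := by
    have := addHom_eq_zero p hp2 (AddMonoidHom.mk' (fun x => f (Fmat p x))
      (by intro x y; show f (Fmat p (x + y)) = f (Fmat p x) + f (Fmat p y)
          rw [← Fmat_mul, hf]))
    simpa using this
  -- triangular case
  have htri : ∀ A : SL2p p, (A : Matrix (Fin 2) (Fin 2) (Rloc p)) 1 0 = 0 → f A = 0 := by
    intro A h10
    obtain ⟨u, v, b, hA⟩ : ∃ u v b, (A : Matrix (Fin 2) (Fin 2) (Rloc p)) = !![u, b; 0, v] :=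
      ⟨_, _, _, by rw [Matrix.eta_fin_two (A : Matrix (Fin 2) (Fin 2) (Rloc p)), h10]⟩
    have huv : u * v = 1 := by
      have h2 := A.2
      rw [hA, Matrix.det_fin_two_of] at h2
      linear_combination h2
    have hAeq : Emat p (-(b * u)) * A =
        Emat p u * Fmat p (-v) * Emat p u * Emat p (-1) * Fmat p 1 * Emat p (-1) := by
      apply Subtype.ext
      simp only [Matrix.SpecialLinearGroup.coe_mul]
      simp only [Matrix.SpecialLinearGroup.coe_mul, Emat, Fmat, hA, Matrix.mul_fin_two]
      ext i j
      fin_cases i <;> fin_cases j <;> simp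
      · linear_combination u * huv
      · linear_combination (-b - 1) * huv
      · linear_combination huv
      · ring
    have hc := congrArg f hAeq
    simp only [hf, hE, hF, zero_add, add_zero] at hc
    linarith [hc]
  -- representation of elements of ℤ[1/p]
  have hrep : ∀ x : Rloc p, ∃ (a : ℤ) (k : ℕ),
      x * (algebraMap ℤ (Rloc p) (p : ℤ)) ^ k = algebraMap ℤ (Rloc p) a := by
    intro x
    obtain ⟨⟨a, m⟩, hm⟩ := IsLocalization.surj (Submonoid.powers ((p : ℤ))) x
    obtain ⟨k, hk⟩ := m.2
    exact ⟨a, k, by rw [← map_pow]; simpa [hk] using hm⟩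
  have hu : IsUnit (algebraMap ℤ (Rloc p) (p : ℤ)) :=
    IsLocalization.Away.algebraMap_isUnit _
  -- main induction
  have main : ∀ N : ℕ, ∀ A : SL2p p, ∀ a c : ℤ, ∀ k : ℕ,
      (A : Matrix (Fin 2) (Fin 2) (Rloc p)) 0 0 * (algebraMap ℤ (Rloc p) (p : ℤ)) ^ k
        = algebraMap ℤ (Rloc p) a →
      (A : Matrix (Fin 2) (Fin 2) (Rloc p)) 1 0 * (algebraMap ℤ (Rloc p) (p : ℤ)) ^ k
        = algebraMap ℤ (Rloc p) c →
      c.natAbs ≤ N → f A = 0 := by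
    intro N
    induction N with
    | zero =>
      intro A a c k _ hc hcN
      have hc0 : c = 0 := by omega
      subst hc0
      have h10 : (A : Matrix (Fin 2) (Fin 2) (Rloc p)) 1 0 = 0 := by
        obtain ⟨w, hw⟩ := hu.pow k
        have h0 : (A : Matrix (Fin 2) (Fin 2) (Rloc p)) 1 0 * (w : Rloc p) = 0 := by
          rw [hw]; simpa using hc
        calc (A : Matrix (Fin 2) (Fin 2) (Rloc p)) 1 0
            = (A : Matrix (Fin 2) (Fin 2) (Rloc p)) 1 0 * (w : Rloc p) * ((w⁻¹ : (Rloc p)ˣ) : Rloc p) :=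
              (Units.mul_inv_cancel_right _ _).symm
          _ = 0 := by rw [h0, zero_mul]
      exact htri A h10
    | succ N ih =>
      intro A a c k ha hc hcN
      by_cases hle : c.natAbs ≤ N
      · exact ih A a c k ha hc hle
      · have hcne : c ≠ 0 := by omega
        set q := a / c with hq
        set r := a % c with hrdef
        have hr : a = c * q + r := (Int.mul_ediv_add_emod a c).symm
        have hrlt : r.natAbs ≤ N := by
          have h1 := Int.emod_nonneg a hcne
          have h2 := Int.emod_lt a hcne
          omega
        set t : Rloc p := algebraMap ℤ (Rloc p) (-q) with ht
        set B := Emat p (-1) * Fmat p 1 * Emat p (-1) * Emat p t * A with hBdef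
        have hBmat : (B : Matrix (Fin 2) (Fin 2) (Rloc p)) = !![0, -1; 1, t] * A := by
          rw [hBdef]
          simp only [Matrix.SpecialLinearGroup.coe_mul]
          simp only [Matrix.SpecialLinearGroup.coe_mul, Emat, Fmat]
          congr 1
          simp only [Matrix.mul_fin_two]
          norm_num
        have hB00 : (B : Matrix (Fin 2) (Fin 2) (Rloc p)) 0 0
            = -((A : Matrix (Fin 2) (Fin 2) (Rloc p)) 1 0) := by
          rw [hBmat]
          simp [Matrix.mul_apply, Fin.sum_univ_two]
          try ring
        have hB10 : (B : Matrix (Fin 2) (Fin 2) (Rloc p)) 1 0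
            = (A : Matrix (Fin 2) (Fin 2) (Rloc p)) 0 0
              + t * (A : Matrix (Fin 2) (Fin 2) (Rloc p)) 1 0 := by
          rw [hBmat]
          simp [Matrix.mul_apply, Fin.sum_univ_two]
          try ring
        have hfB : f B = 0 := by
          refine ih B (-c) r k ?_ ?_ hrlt
          · rw [hB00, _root_.map_neg, ← hc]; ring
          · rw [hB10, add_mul, mul_assoc, hc, ha, ht, ← _root_.map_mul, ← _root_.map_add]
            congr 1
            rw [hr]; ring
        rw [hBdef] at hfB
        simp only [hf, hE, hF, zero_add, add_zero] at hfB
        linarith [hfB]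
  obtain ⟨a, k1, ha⟩ := hrep ((A : Matrix (Fin 2) (Fin 2) (Rloc p)) 0 0)
  obtain ⟨c, k2, hc⟩ := hrep ((A : Matrix (Fin 2) (Fin 2) (Rloc p)) 1 0)
  refine main (c * (p : ℤ) ^ k1).natAbs A (a * (p : ℤ) ^ k2) (c * (p : ℤ) ^ k1)
    (k1 + k2) ?_ ?_ le_rfl
  · rw [pow_add, ← mul_assoc, ha, ← _root_.map_pow, ← _root_.map_mul]
  · rw [pow_add, mul_comm ((algebraMap ℤ (Rloc p) (p : ℤ)) ^ k1), ← mul_assoc, hc,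
      ← _root_.map_pow, ← _root_.map_mul]

/-- For a prime `p > 3`, the first integral cohomology of `SL₂(ℤ[1/p])` vanishes. -/
theorem H1_SL2_Z_inv_p_eq_zero (p : ℕ) (hp : p.Prime) (hp3 : 3 < p) :
    Subsingleton (groupCohomology (Rep.trivial ℤ
      (Matrix.SpecialLinearGroup (Fin 2) (Localization.Away (p : ℤ))) ℤ) 1) := by
  have hp2 : 2 ≤ p := hp.two_le
  have e3 : groupCohomology (Rep.trivial ℤ (SL2p p) ℤ) 1 ≃ (Additive (SL2p p) →+ ℤ) :=
    ((forget _).mapIso (groupCohomology.H1IsoOfIsTrivial (Rep.trivial ℤ (SL2p p) ℤ))).toEquiv.trans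
      (Equiv.refl _)
  haveI : Subsingleton (Additive (SL2p p) →+ ℤ) := by
    constructor
    intro φ ψ
    have hzero : ∀ χ : Additive (SL2p p) →+ ℤ, χ = 0 := by
      intro χ
      ext x
      have hf : ∀ A B : SL2p p, (fun A => χ (Additive.ofMul A)) (A * B)
          = (fun A => χ (Additive.ofMul A)) A + (fun A => χ (Additive.ofMul A)) B := by
        intro A B
        simp only []
        rw [← map_add]
        rfl
      exact f_eq_zero p hp2 (fun A => χ (Additive.ofMul A)) hf (Additive.toMul (x : Additive (SL2p p)))
    rw [hzero φ, hzero ψ]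
  exact e3.subsingleton
end
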